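/- Let Ω ⊆ ℝⁿ be open and convex, α > 0, and φ : Ω → ℝ differentiable with e^{αφ} strictly concave on Ω. Then L^{(α)}_φ[ξ:ξ'] = 0 if and only if ξ = ξ'. -/

import Mathlib

open Real Set
open scoped RealInnerProductSpace

abbrev E (n : ℕ) := EuclideanSpace ℝ (Fin n)

lemma concave_grad_ineq {n : ℕ} {Ω : Set (E n)}
    {g : E n → ℝ} (hg : ConcaveOn ℝ Ω g)
    {x : E n} (hx : x ∈ Ω) {f' : E n →L[ℝ] ℝ} (hf : HasFDerivAt g f' x)
    {y : E n} (hy : y ∈ Ω) : g y ≤ g x + f' (y - x) := by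
  set v := y - x with hv
  set F : ℝ → ℝ := fun t : ℝ => g (x + t • v) with hF
  have hc : HasDerivAt F (f' v) 0 := by
    have h1 : HasDerivAt (fun t : ℝ => x + t • v) v 0 := by
      simpa using ((hasDerivAt_id (0:ℝ)).smul_const v).const_add x
    have hf' : HasFDerivAt g f' (x + (0:ℝ) • v) := by simpa using hf
    exact hf'.comp_hasDerivAt 0 h1
  have hslope : ∀ t ∈ Set.Ioc (0:ℝ) 1, g y - g x ≤ slope F 0 t := by
    intro t ht
    have hmem : (1 - t) * g x + t * g y ≤ g ((1-t) • x + t • y) :=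
      hg.2 hx hy (by linarith [ht.2]) (le_of_lt ht.1) (by ring)
    have heq : x + t • v = (1-t) • x + t • y := by rw [hv]; module
    have h2 : t * (g y - g x) ≤ F t - F 0 := by
      simp only [hF, heq, zero_smul, add_zero]
      nlinarith [hmem]
    rw [slope_def_field]
    rw [sub_zero]
    exact (le_div_iff₀ ht.1).2 (by linarith)
  have htend : Filter.Tendsto (slope F 0) (nhdsWithin 0 (Set.Ioi 0)) (nhds (f' v)) := by
    have := hasDerivAt_iff_tendsto_slope.1 hc
    exact this.mono_left (nhdsWithin_mono _ (fun t ht => ne_of_gt ht))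
  have hfin : g y - g x ≤ f' v :=
    ge_of_tendsto htend (Filter.eventually_of_mem (Ioc_mem_nhdsGT_of_mem (by norm_num : (0:ℝ) ∈ Set.Ico (0:ℝ) 1)) hslope)
  linarith

lemma strict_concave_grad_ineq {n : ℕ} {Ω : Set (E n)} (hΩ : Convex ℝ Ω)
    {g : E n → ℝ} (hg : StrictConcaveOn ℝ Ω g)
    {x : E n} (hx : x ∈ Ω) {f' : E n →L[ℝ] ℝ} (hf : HasFDerivAt g f' x)
    {y : E n} (hy : y ∈ Ω) (hne : y ≠ x) : g y < g x + f' (y - x) := by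
  set m := (1/2 : ℝ) • x + (1/2 : ℝ) • y with hm
  have hmΩ : m ∈ Ω := hΩ hx hy (by norm_num) (by norm_num) (by norm_num)
  have hstrict : (1/2 : ℝ) * g x + (1/2 : ℝ) * g y < g m :=
    hg.2 hx hy (Ne.symm hne) (by norm_num) (by norm_num) (by norm_num)
  have hA : g m ≤ g x + f' (m - x) := concave_grad_ineq hg.concaveOn hx hf hmΩ
  have hms : m - x = (1/2 : ℝ) • (y - x) := by rw [hm]; module
  rw [hms, map_smul] at hA
  simp only [smul_eq_mul] at hA
  linarith

theorem log_divergence_eq_zero_iff (n : ℕ) (Ω : Set (E n))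
    (hΩopen : IsOpen Ω) (hΩconv : Convex ℝ Ω)
    (α : ℝ) (hα : 0 < α)
    (φ : E n → ℝ) (Dφ : E n → E n)
    (hdiff : ∀ ξ ∈ Ω, HasGradientAt φ (Dφ ξ) ξ)
    (hconc : StrictConcaveOn ℝ Ω (fun ξ => Real.exp (α * φ ξ))) :
    ∀ ξ ∈ Ω, ∀ ξ' ∈ Ω,
      ((1 / α) * Real.log (1 + α * ⟪Dφ ξ', ξ - ξ'⟫) - (φ ξ - φ ξ') = 0 ↔ ξ = ξ') := by
  intro ξ hξ ξ' hξ'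
  constructor
  · intro hL
    by_contra hne
    have hφ : HasFDerivAt φ ((InnerProductSpace.toDual ℝ (E n)) (Dφ ξ')) ξ' := hdiff ξ' hξ'
    have hg : HasFDerivAt (fun ξ => Real.exp (α * φ ξ))
        (Real.exp (α * φ ξ') • (α • (InnerProductSpace.toDual ℝ (E n)) (Dφ ξ'))) ξ' :=
      (hφ.const_mul α).exp
    have hstrict := strict_concave_grad_ineq hΩconv hconc hξ' hg hξ hne
    have heval : (Real.exp (α * φ ξ') • (α • (InnerProductSpace.toDual ℝ (E n)) (Dφ ξ'))) (ξ - ξ')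
        = Real.exp (α * φ ξ') * (α * ⟪Dφ ξ', ξ - ξ'⟫) := by
      simp [InnerProductSpace.toDual_apply_apply]
    rw [heval] at hstrict
    set t := α * ⟪Dφ ξ', ξ - ξ'⟫ with ht
    by_cases hpos : 0 < 1 + t
    · have hlog : Real.log (1 + t) = α * (φ ξ - φ ξ') := by
        field_simp at hL; linarith
      have hexp : 1 + t = Real.exp (α * (φ ξ - φ ξ')) := by
        rw [← hlog, Real.exp_log hpos]
      have : Real.exp (α * φ ξ') * (1 + t) = Real.exp (α * φ ξ) := by
        rw [hexp, ← Real.exp_add]; ring_nf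
      nlinarith [hstrict]
    · nlinarith [Real.exp_pos (α * φ ξ), Real.exp_pos (α * φ ξ')]
  · intro h
    subst h
    simp
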